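/- Over an algebraically closed field F, the 5-dimensional evolution algebras E_{5,19} : e₁² = e₂, e₂² = e₃² = e₄, e₄² = e₅ and E_{5,20} : e₁² = e₂, e₂² = e₄, e₃² = e₄ + e₅, e₄² = e₅ are not isomorphic. -/
import Mathlib


/-- Multiplication of `E₅,₁₉ : e₁² = e₂, e₂² = e₃² = e₄, e₄² = e₅` on `F⁵`. -/
def mulE519 {F : Type*} [Field F] : (Fin 5 → F) → (Fin 5 → F) → (Fin 5 → F) :=
  fun x y => ![0, x 0 * y 0, 0, x 1 * y 1 + x 2 * y 2, x 3 * y 3]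

/-- Multiplication of `E₅,₂₀ : e₁² = e₂, e₂² = e₄, e₃² = e₄ + e₅, e₄² = e₅` on `F⁵`. -/
def mulE520 {F : Type*} [Field F] : (Fin 5 → F) → (Fin 5 → F) → (Fin 5 → F) :=
  fun x y => ![0, x 0 * y 0, 0, x 1 * y 1 + x 2 * y 2, x 2 * y 2 + x 3 * y 3]

/-- Over an algebraically closed field `F`, the 5-dimensional evolution
algebras `E₅,₁₉` and `E₅,₂₀` are not isomorphic. -/
theorem stmt18 {F : Type*} [Field F] [IsAlgClosed F] :
    ¬ ∃ σ : (Fin 5 → F) ≃ₗ[F] (Fin 5 → F),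
        ∀ x y, σ (mulE519 x y) = mulE520 (σ x) (σ y) := by
  rintro ⟨σ, hσ⟩
  obtain ⟨i, hi⟩ := IsAlgClosed.exists_pow_nat_eq (-1 : F) (n := 2) (by norm_num)
  set x : Fin 5 → F := ![0, i, 1, i, 0] with hx
  have hxx : mulE520 x x = (0 : Fin 5 → F) := by
    funext j
    fin_cases j <;> simp [mulE520, hx] <;> linear_combination hi
  set u := σ.symm x with hudef
  have hsu : σ u = x := σ.apply_symm_apply x
  have huu : mulE519 u u = 0 := by
    have h := hσ u u
    rw [hsu, hxx] at h
    exact σ.injective (h.trans (map_zero σ).symm)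
  have hu0 : u 0 = 0 := by
    have := congrFun huu 1
    simpa [mulE519, mul_self_eq_zero] using this
  have hu3 : u 3 = 0 := by
    have := congrFun huu 4
    simpa [mulE519, mul_self_eq_zero] using this
  have key : ∀ z : Fin 5 → F, mulE520 x z
      = (u 1 * (σ.symm z) 1 + u 2 * (σ.symm z) 2) • σ ![0, 0, 0, 1, 0] := by
    intro z
    have h := hσ u (σ.symm z)
    rw [hsu, σ.apply_symm_apply] at h
    rw [← h, ← map_smul]
    congr 1
    funext j
    fin_cases j <;> simp [mulE519, hu0, hu3]
  have h1 := key ![0, 0, 1, 0, 0]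
  have h2 := key ![0, 0, 0, 1, 0]
  set w := σ ![0, 0, 0, (1:F), 0] with hw
  have h13 : (1 : F) = (u 1 * σ.symm ![0, 0, 1, 0, 0] 1 + u 2 * σ.symm ![0, 0, 1, 0, 0] 2) * w 3 := by
    have := congrFun h1 3
    simpa [mulE520, hx] using this
  have h23 : (0 : F) = (u 1 * σ.symm ![0, 0, 0, 1, 0] 1 + u 2 * σ.symm ![0, 0, 0, 1, 0] 2) * w 3 := by
    have := congrFun h2 3
    simpa [mulE520, hx] using this
  have h24 : (i : F) = (u 1 * σ.symm ![0, 0, 0, 1, 0] 1 + u 2 * σ.symm ![0, 0, 0, 1, 0] 2) * w 4 := by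
    have := congrFun h2 4
    simpa [mulE520, hx] using this
  -- from h23 : either the scalar is 0 or w 3 = 0; but h13 forces w 3 ≠ 0 and scalar₁ ≠ 0
  rcases mul_eq_zero.mp h23.symm with hc | hw3
  · rw [hc, zero_mul] at h24
    have : (0:F) = -1 := by rw [← hi, h24]; ring
    exact one_ne_zero (by linear_combination this)
  · rw [hw3, mul_zero] at h13
    exact one_ne_zero h13
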